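/- arXiv:2010.01287 — 2 statements merged into one kernel-verified Lean document; each statement's English description precedes it below -/
import Mathlib

section
/- Let x_1,…,x_m ∈ ℝ^d solve the system ‖x_i − x_j‖₂ = d_{ij} for all ij ∈ E_ss and ‖x_i − a_k‖₂ = d_{ik} for all ik ∈ E_sa. Then the matrix Z = [[I_d, X],[Xᵀ, XᵀX]] with X = (x₁,…,x_m) is a feasible point of the rank-constrained SDP: A_{ij} • Z = d_{ij}², A_{ik} • Z = d_{ik}², Z_{(1:d,1:d)} = I_d, rank(Z) ≤ d, and Z ⪰ 0. Conversely, any feasible Z of this SDP yields a solution of the distance system via its off-diagonal block X = Z_{(1:d, d+1:d+m)}. -/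
open Matrix

private lemma snl_trace_vecMulVec {n : Type*} [Fintype n] (v : n → ℝ) (Z : Matrix n n ℝ) :
    Matrix.trace ((Matrix.vecMulVec v v)ᵀ * Z) = v ⬝ᵥ (Z *ᵥ v) := by
  simp only [Matrix.trace, Matrix.diag, Matrix.mul_apply, Matrix.transpose_apply,
    Matrix.vecMulVec_apply, dotProduct, Matrix.mulVec, Finset.mul_sum]
  rw [Finset.sum_comm]
  exact Finset.sum_congr rfl fun i _ => Finset.sum_congr rfl fun j _ => by ring

private lemma snl_factor {d m : ℕ} (X : Matrix (Fin d) (Fin m) ℝ) :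
    (Matrix.fromCols 1 X)ᵀ * (Matrix.fromCols 1 X)
      = Matrix.fromBlocks 1 X Xᵀ (Xᵀ * X) := by
  rw [Matrix.transpose_fromCols, Matrix.fromRows_mul_fromCols]
  simp

private lemma snl_quad {d m : ℕ} (X : Matrix (Fin d) (Fin m) ℝ) (v : Fin d ⊕ Fin m → ℝ) :
    v ⬝ᵥ ((Matrix.fromBlocks 1 X Xᵀ (Xᵀ * X)) *ᵥ v)
      = (Matrix.fromCols 1 X *ᵥ v) ⬝ᵥ (Matrix.fromCols 1 X *ᵥ v) := by
  rw [← snl_factor X, ← Matrix.mulVec_mulVec, Matrix.dotProduct_mulVec, Matrix.vecMul_transpose]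

private lemma snl_norm_sq {d : ℕ} (y : Fin d → ℝ) :
    ‖(EuclideanSpace.equiv (Fin d) ℝ).symm y‖ ^ 2 = y ⬝ᵥ y := by
  rw [EuclideanSpace.norm_eq, Real.sq_sqrt (by positivity)]
  simp [dotProduct, sq]

private lemma snl_norm_eq_of_dot {d : ℕ} {y : Fin d → ℝ} {c : ℝ} (h : y ⬝ᵥ y = c ^ 2)
    (hc : 0 ≤ c) : ‖(EuclideanSpace.equiv (Fin d) ℝ).symm y‖ = c := by
  have h2 : ‖(EuclideanSpace.equiv (Fin d) ℝ).symm y‖ ^ 2 = c ^ 2 := by rw [snl_norm_sq, h]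
  rw [← Real.sqrt_sq hc, ← h2, Real.sqrt_sq (norm_nonneg _)]

private lemma snl_rank_blockdiag {d m : ℕ} (S : Matrix (Fin m) (Fin m) ℝ) :
    (Matrix.fromBlocks (1 : Matrix (Fin d) (Fin d) ℝ) 0 0 S).rank = d + S.rank := by
  set W := Matrix.fromBlocks (1 : Matrix (Fin d) (Fin d) ℝ) 0 0 S with hW
  set E := LinearEquiv.sumArrowLequivProdArrow (Fin d) (Fin m) ℝ ℝ with hE
  set g := (LinearMap.id : (Fin d → ℝ) →ₗ[ℝ] (Fin d → ℝ)).prodMap S.mulVecLin with hg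
  have key : W.mulVecLin = E.symm.toLinearMap ∘ₗ g ∘ₗ E.toLinearMap := by
    ext v z
    cases z with
    | inl l =>
      simp [hW, hE, hg, Matrix.mulVec, dotProduct, Fintype.sum_sum_type,
        Matrix.one_apply, LinearEquiv.sumArrowLequivProdArrow, Finset.sum_ite_eq]
    | inr i =>
      simp [hW, hE, hg, Matrix.mulVec, dotProduct, Fintype.sum_sum_type,
        LinearEquiv.sumArrowLequivProdArrow]
  have hrk : W.rank = Module.finrank ℝ (LinearMap.range g) := by
    rw [Matrix.rank, key, LinearMap.range_comp, LinearMap.range_comp, LinearEquiv.range,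
      Submodule.map_top, LinearEquiv.finrank_map_eq]
  have hker : LinearMap.ker g = Submodule.map (LinearMap.inr ℝ (Fin d → ℝ) (Fin m → ℝ))
      (LinearMap.ker S.mulVecLin) := by
    rw [hg, LinearMap.ker_prodMap, LinearMap.ker_id, Submodule.map_inr]
  have hkerrank : Module.finrank ℝ (LinearMap.ker g)
      = Module.finrank ℝ (LinearMap.ker S.mulVecLin) := by
    rw [hker]
    exact (LinearEquiv.finrank_eq (Submodule.equivMapOfInjective _
      (LinearMap.inr_injective) _)).symm
  have h1 := LinearMap.finrank_range_add_finrank_ker g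
  have h2 := LinearMap.finrank_range_add_finrank_ker S.mulVecLin
  have hdom : Module.finrank ℝ ((Fin d → ℝ) × (Fin m → ℝ)) = d + m := by
    simp [Module.finrank_prod]
  rw [hdom] at h1
  simp only [Module.finrank_fintype_fun_eq_card, Fintype.card_fin] at h2
  rw [hkerrank] at h1
  have : S.rank = Module.finrank ℝ (LinearMap.range S.mulVecLin) := rfl
  omega

private lemma snl_rank_zero {m : ℕ} (S : Matrix (Fin m) (Fin m) ℝ) (h : S.rank = 0) : S = 0 := by
  have hbot : LinearMap.range S.mulVecLin = ⊥ := Submodule.finrank_eq_zero.mp h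
  have hz : ∀ v, S *ᵥ v = 0 := fun v =>
    (Submodule.mem_bot ℝ).mp (hbot ▸ LinearMap.mem_range_self S.mulVecLin v)
  ext i j
  simpa [Matrix.mulVec_single] using congrFun (hz (Pi.single j 1)) i

private lemma snl_schur {d m : ℕ} (Z : Matrix (Fin d ⊕ Fin m) (Fin d ⊕ Fin m) ℝ)
    (h11 : Z.toBlocks₁₁ = 1) (hrank : Z.rank ≤ d) (hpsd : Z.PosSemidef) :
    Z = Matrix.fromBlocks 1 Z.toBlocks₁₂ Z.toBlocks₁₂ᵀ (Z.toBlocks₁₂ᵀ * Z.toBlocks₁₂) := by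
  have hsym : Zᵀ = Z := by
    have := hpsd.1
    rwa [Matrix.IsHermitian, Matrix.conjTranspose_eq_transpose_of_trivial] at this
  set X := Z.toBlocks₁₂ with hX
  have h21 : Z.toBlocks₂₁ = Xᵀ := by
    have : (Zᵀ).toBlocks₂₁ = Xᵀ := rfl
    rwa [hsym] at this
  set D := Z.toBlocks₂₂ with hD
  have hZ : Z = Matrix.fromBlocks 1 X Xᵀ D := by
    conv_lhs => rw [← Matrix.fromBlocks_toBlocks Z, h11, h21]
  set S := D - Xᵀ * X with hS
  set L := Matrix.fromBlocks (1 : Matrix (Fin d) (Fin d) ℝ) 0 (-Xᵀ)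
    (1 : Matrix (Fin m) (Fin m) ℝ) with hL
  have hfact : L * Z * Lᵀ = Matrix.fromBlocks 1 0 0 S := by
    rw [hZ, hL, Matrix.fromBlocks_transpose, Matrix.fromBlocks_multiply,
      Matrix.fromBlocks_multiply]
    congr 1 <;> simp [hS] <;> abel
  have hdetL : IsUnit L.det := by
    rw [hL, Matrix.det_fromBlocks_zero₁₂]
    simp
  have hdetLT : IsUnit Lᵀ.det := by rwa [Matrix.det_transpose]
  have hrk : (Matrix.fromBlocks (1 : Matrix (Fin d) (Fin d) ℝ) 0 0 S).rank = Z.rank := by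
    rw [← hfact, Matrix.rank_mul_eq_left_of_isUnit_det _ _ hdetLT,
      Matrix.rank_mul_eq_right_of_isUnit_det _ _ hdetL]
  have hS0 : S = 0 := by
    apply snl_rank_zero
    have := snl_rank_blockdiag (d := d) S
    omega
  have hDeq : D = Xᵀ * X := by
    have := sub_eq_zero.mp (hS ▸ hS0)
    exact this
  rw [hZ, hDeq]

/-- Equivalence between solutions of the distance system of sensor network localization
and feasible points of the rank-constrained SDP. -/
theorem snl_system_iff_rank_sdp
    (d m nA : ℕ) (a : Fin nA → (Fin d → ℝ))
    (Ess : Set (Fin m × Fin m)) (Esa : Set (Fin m × Fin nA))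
    (dss : Fin m → Fin m → ℝ) (dsa : Fin m → Fin nA → ℝ)
    (hdss : ∀ e ∈ Ess, 0 ≤ dss e.1 e.2) (hdsa : ∀ e ∈ Esa, 0 ≤ dsa e.1 e.2)
    (Ass : Fin m → Fin m → Matrix (Fin d ⊕ Fin m) (Fin d ⊕ Fin m) ℝ)
    (hAss : ∀ i j : Fin m, Ass i j =
      Matrix.vecMulVec (Sum.elim (0 : Fin d → ℝ) (Pi.single i 1 - Pi.single j 1))
        (Sum.elim (0 : Fin d → ℝ) (Pi.single i 1 - Pi.single j 1)))
    (Asa : Fin m → Fin nA → Matrix (Fin d ⊕ Fin m) (Fin d ⊕ Fin m) ℝ)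
    (hAsa : ∀ (i : Fin m) (k : Fin nA), Asa i k =
      Matrix.vecMulVec (Sum.elim (a k) (-(Pi.single i 1)))
        (Sum.elim (a k) (-(Pi.single i 1)))) :
    -- forward direction: a solution of the distance system gives a feasible Z
    ((∀ x : Fin m → (Fin d → ℝ),
      (∀ e ∈ Ess, ‖(EuclideanSpace.equiv (Fin d) ℝ).symm (x e.1 - x e.2)‖ = dss e.1 e.2) →
      (∀ e ∈ Esa, ‖(EuclideanSpace.equiv (Fin d) ℝ).symm (x e.1 - a e.2)‖ = dsa e.1 e.2) →
      ∀ X : Matrix (Fin d) (Fin m) ℝ, (∀ l i, X l i = x i l) →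
      ∀ Z : Matrix (Fin d ⊕ Fin m) (Fin d ⊕ Fin m) ℝ,
        Z = Matrix.fromBlocks 1 X X.transpose (X.transpose * X) →
        (∀ e ∈ Ess, Matrix.trace ((Ass e.1 e.2).transpose * Z) = (dss e.1 e.2) ^ 2) ∧
        (∀ e ∈ Esa, Matrix.trace ((Asa e.1 e.2).transpose * Z) = (dsa e.1 e.2) ^ 2) ∧
        Z.toBlocks₁₁ = 1 ∧ Z.rank ≤ d ∧ Z.PosSemidef)) ∧
    -- converse direction: a feasible Z yields a solution of the distance system
    (∀ Z : Matrix (Fin d ⊕ Fin m) (Fin d ⊕ Fin m) ℝ,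
      (∀ e ∈ Ess, Matrix.trace ((Ass e.1 e.2).transpose * Z) = (dss e.1 e.2) ^ 2) →
      (∀ e ∈ Esa, Matrix.trace ((Asa e.1 e.2).transpose * Z) = (dsa e.1 e.2) ^ 2) →
      Z.toBlocks₁₁ = 1 → Z.rank ≤ d → Z.PosSemidef →
      ∀ x : Fin m → (Fin d → ℝ), (∀ i l, x i l = Z.toBlocks₁₂ l i) →
        (∀ e ∈ Ess, ‖(EuclideanSpace.equiv (Fin d) ℝ).symm (x e.1 - x e.2)‖ = dss e.1 e.2) ∧
        (∀ e ∈ Esa, ‖(EuclideanSpace.equiv (Fin d) ℝ).symm (x e.1 - a e.2)‖ = dsa e.1 e.2)) := by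
  constructor
  · -- forward direction
    intro x hss hsa X hXdef Z hZdef
    have hBss : ∀ i j : Fin m, Matrix.fromCols 1 X *ᵥ
        Sum.elim (0 : Fin d → ℝ) (Pi.single i 1 - Pi.single j 1) = x i - x j := by
      intro i j
      rw [Matrix.fromCols_mulVec_sumElim]
      funext l
      simp [Matrix.mulVec_sub, Matrix.mulVec_single, hXdef]
    have hBsa : ∀ (i : Fin m) (k : Fin nA), Matrix.fromCols 1 X *ᵥ
        Sum.elim (a k) (-(Pi.single i 1)) = a k - x i := by
      intro i k
      rw [Matrix.fromCols_mulVec_sumElim]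
      funext l
      simp [Matrix.mulVec_neg, Matrix.mulVec_single, hXdef, sub_eq_add_neg]
    refine ⟨?_, ?_, ?_, ?_, ?_⟩
    · intro e he
      rw [hAss, snl_trace_vecMulVec, hZdef, snl_quad, hBss, ← snl_norm_sq, hss e he]
    · intro e he
      rw [hAsa, snl_trace_vecMulVec, hZdef, snl_quad, hBsa]
      rw [show a e.2 - x e.1 = -(x e.1 - a e.2) by ring]
      rw [neg_dotProduct, dotProduct_neg, neg_neg, ← snl_norm_sq, hsa e he]
    · rw [hZdef]
      exact Matrix.toBlocks_fromBlocks₁₁ _ _ _ _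
    · rw [hZdef, ← snl_factor X, ← Matrix.conjTranspose_eq_transpose_of_trivial,
        Matrix.rank_conjTranspose_mul_self]
      simpa using Matrix.rank_le_card_height (Matrix.fromCols 1 X)
    · rw [hZdef, ← snl_factor X, ← Matrix.conjTranspose_eq_transpose_of_trivial]
      exact Matrix.posSemidef_conjTranspose_mul_self _
  · -- converse direction
    intro Z htrss htrsa h11 hrank hpsd x hx
    set X := Z.toBlocks₁₂ with hXdef
    have hZ : Z = Matrix.fromBlocks 1 X Xᵀ (Xᵀ * X) := snl_schur Z h11 hrank hpsd
    have hBss : ∀ i j : Fin m, Matrix.fromCols 1 X *ᵥ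
        Sum.elim (0 : Fin d → ℝ) (Pi.single i 1 - Pi.single j 1) = x i - x j := by
      intro i j
      rw [Matrix.fromCols_mulVec_sumElim]
      funext l
      simp [Matrix.mulVec_sub, Matrix.mulVec_single, hx]
    have hBsa : ∀ (i : Fin m) (k : Fin nA), Matrix.fromCols 1 X *ᵥ
        Sum.elim (a k) (-(Pi.single i 1)) = a k - x i := by
      intro i k
      rw [Matrix.fromCols_mulVec_sumElim]
      funext l
      simp [Matrix.mulVec_neg, Matrix.mulVec_single, hx, sub_eq_add_neg]
    constructor
    · intro e he
      have h := htrss e he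
      rw [hAss, snl_trace_vecMulVec, hZ, snl_quad, hBss] at h
      exact snl_norm_eq_of_dot h (hdss e he)
    · intro e he
      have h := htrsa e he
      rw [hAsa, snl_trace_vecMulVec, hZ, snl_quad, hBsa] at h
      rw [show a e.2 - x e.1 = -(x e.1 - a e.2) by ring,
        neg_dotProduct, dotProduct_neg, neg_neg] at h
      exact snl_norm_eq_of_dot h (hdsa e he)
end

section
/- Suppose γ > ½ √(2 f₀) · max_{1≤i≤m} √(4|E_ss[i]| + |E_sa[i]|), where f₀ ≥ 0 is a bound with ½Σ_{ij∈E_ss} α_{ij}² + ½Σ_{ik∈E_sa} α_{ik}² ≤ f₀. Define the m×m symmetric matrix Ā = Σ_{ij∈E_ss} α_{ij}(e_i−e_j)(e_i−e_j)ᵀ + Σ_{ik∈E_sa} α_{ik} e_i e_iᵀ. Then 2γ I_m − Ā is positive definite. -/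
open scoped Matrix

/-- Two-dimensional Cauchy–Schwarz. -/
lemma cs2_aux {a b c d : ℝ} (ha : 0 ≤ a) (hb : 0 ≤ b) (hc : 0 ≤ c) (hd : 0 ≤ d) :
    a * c + b * d ≤ Real.sqrt (a ^ 2 + b ^ 2) * Real.sqrt (c ^ 2 + d ^ 2) := by
  rw [← Real.sqrt_mul (by positivity)]
  apply Real.le_sqrt_of_sq_le
  nlinarith [sq_nonneg (a * d - b * c)]

/-- Cauchy–Schwarz for a sum of absolute values. -/
lemma abs_sum_le_sqrt {ι : Type*} (s : Finset ι) (f : ι → ℝ) :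
    ∑ e ∈ s, |f e| ≤ Real.sqrt (s.card : ℝ) * Real.sqrt (∑ e ∈ s, (f e) ^ 2) := by
  rw [← Real.sqrt_mul (by positivity)]
  apply Real.le_sqrt_of_sq_le
  have h := Finset.sum_mul_sq_le_sq_mul_sq s (fun _ => (1 : ℝ)) (fun e => |f e|)
  simp only [one_mul, one_pow, sq_abs, Finset.sum_const, nsmul_eq_mul, mul_one] at h
  exact h

lemma dot_sum_mulVec {m : ℕ} {ι : Type*} (s : Finset ι)
    (M : ι → Matrix (Fin m) (Fin m) ℝ) (x : Fin m → ℝ) :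
    x ⬝ᵥ (∑ e ∈ s, M e) *ᵥ x = ∑ e ∈ s, x ⬝ᵥ (M e) *ᵥ x := by
  classical
  induction s using Finset.cons_induction with
  | empty => simp
  | cons a s ha ih =>
      rw [Finset.sum_cons, Finset.sum_cons, Matrix.add_mulVec, dotProduct_add, ih]

lemma dot_vecMulVec {m : ℕ} (u x : Fin m → ℝ) :
    x ⬝ᵥ (Matrix.vecMulVec u u) *ᵥ x = (u ⬝ᵥ x) ^ 2 := by
  simp only [Matrix.mulVec, dotProduct, Matrix.vecMulVec_apply, Finset.mul_sum]
  rw [sq, Finset.sum_mul_sum]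
  exact Finset.sum_congr rfl fun i _ => Finset.sum_congr rfl fun j _ => by ring

set_option maxHeartbeats 1000000 in
/-- If `γ` exceeds `½√(2f₀)·maxᵢ√(4|E_ss[i]| + |E_sa[i]|)` and the residuals `α` satisfy
the quadratic bound `½Σα² ≤ f₀`, then `2γI − Ā` is positive definite, where
`Ā = Σ α_{ij}(eᵢ−eⱼ)(eᵢ−eⱼ)ᵀ + Σ α_{ik} eᵢeᵢᵀ`. -/
theorem two_gamma_minus_A_posdef
    (m nA : ℕ) (hm : 0 < m) (f₀ γ : ℝ) (hf₀ : 0 ≤ f₀)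
    (Ess : Finset (Fin m × Fin m)) (Esa : Finset (Fin m × Fin nA))
    (αss : Fin m × Fin m → ℝ) (αsa : Fin m × Fin nA → ℝ)
    (hbound : 1 / 2 * ∑ e ∈ Ess, (αss e) ^ 2 + 1 / 2 * ∑ e ∈ Esa, (αsa e) ^ 2 ≤ f₀)
    (hγ : 1 / 2 * Real.sqrt (2 * f₀) *
        Finset.univ.sup' (Finset.univ_nonempty_iff.mpr ⟨⟨0, hm⟩⟩)
          (fun i : Fin m => Real.sqrt
            (4 * ((Ess.filter fun e => e.1 = i ∨ e.2 = i).card : ℝ) +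
              ((Esa.filter fun e => e.1 = i).card : ℝ))) < γ)
    (A : Matrix (Fin m) (Fin m) ℝ)
    (hA : A = ∑ e ∈ Ess, αss e •
        Matrix.vecMulVec (Pi.single e.1 1 - Pi.single e.2 1)
          (Pi.single e.1 1 - Pi.single e.2 1)
      + ∑ e ∈ Esa, αsa e • Matrix.vecMulVec (Pi.single e.1 1) (Pi.single e.1 1)) :
    ((2 * γ) • (1 : Matrix (Fin m) (Fin m) ℝ) - A).PosDef := by
  classical
  -- notation
  set ne : Finset.univ.Nonempty := Finset.univ_nonempty_iff.mpr ⟨(⟨0, hm⟩ : Fin m)⟩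
  set sup := Finset.univ.sup' ne
      (fun i : Fin m => Real.sqrt
        (4 * ((Ess.filter fun e => e.1 = i ∨ e.2 = i).card : ℝ) +
          ((Esa.filter fun e => e.1 = i).card : ℝ))) with hsup
  set M : ℝ := Real.sqrt (2 * f₀) * sup with hM
  have hsqrt0 : (0:ℝ) ≤ Real.sqrt (2 * f₀) := Real.sqrt_nonneg _
  have hMlt : M < 2 * γ := by
    have := hγ
    rw [hM]
    nlinarith [hγ]
  -- A is Hermitian
  have hAsym : A.IsHermitian := by
    show Aᴴ = A
    rw [hA]
    ext i j
    simp only [Matrix.conjTranspose_apply, Matrix.add_apply, Matrix.sum_apply,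
      Matrix.smul_apply, Matrix.vecMulVec_apply, star_trivial, smul_eq_mul]
    ring_nf
    congr 1 <;> exact Finset.sum_congr rfl (fun e _ => by ring)
  have hHerm : ((2 * γ) • (1 : Matrix (Fin m) (Fin m) ℝ) - A).IsHermitian := by
    show _ᴴ = _
    rw [Matrix.conjTranspose_sub, Matrix.conjTranspose_smul, Matrix.conjTranspose_one,
      hAsym.eq, star_trivial]
  refine Matrix.PosDef.of_dotProduct_mulVec_pos hHerm fun x hx => ?_
  rw [star_trivial]
  -- quadratic form of A
  have hquad : x ⬝ᵥ A *ᵥ x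
      = ∑ e ∈ Ess, αss e * (x e.1 - x e.2) ^ 2 + ∑ e ∈ Esa, αsa e * (x e.1) ^ 2 := by
    rw [hA, Matrix.add_mulVec, dotProduct_add, dot_sum_mulVec, dot_sum_mulVec]
    congr 1 <;> refine Finset.sum_congr rfl (fun e _ => ?_) <;>
      rw [Matrix.smul_mulVec, dotProduct_smul, dot_vecMulVec] <;>
      simp [sub_dotProduct, single_dotProduct, smul_eq_mul]
  -- full quadratic form
  have hfull : x ⬝ᵥ ((2 * γ) • (1 : Matrix (Fin m) (Fin m) ℝ) - A) *ᵥ x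
      = 2 * γ * ∑ i, (x i) ^ 2 - x ⬝ᵥ A *ᵥ x := by
    rw [Matrix.sub_mulVec, dotProduct_sub, Matrix.smul_mulVec,
      Matrix.one_mulVec, dotProduct_smul]
    simp [dotProduct, sq, Finset.mul_sum]
  rw [hfull]
  -- it suffices to bound the quadratic form of A
  have hxpos : 0 < ∑ i, (x i) ^ 2 := by
    obtain ⟨i, hi⟩ := Function.ne_iff.mp hx
    have h1 : (x i) ^ 2 ≤ ∑ j, (x j) ^ 2 :=
      Finset.single_le_sum (fun j _ => sq_nonneg (x j)) (Finset.mem_univ i)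
    have h2 : 0 < (x i) ^ 2 := sq_pos_of_ne_zero hi
    linarith
  suffices hS : x ⬝ᵥ A *ᵥ x ≤ M * ∑ i, (x i) ^ 2 by
    nlinarith [hxpos, hMlt]
  rw [hquad]
  -- drop degenerate edges
  set Ess' := Ess.filter (fun e => e.1 ≠ e.2) with hEss'
  have hdrop : ∑ e ∈ Ess, αss e * (x e.1 - x e.2) ^ 2
      = ∑ e ∈ Ess', αss e * (x e.1 - x e.2) ^ 2 := by
    refine (Finset.sum_subset (Finset.filter_subset _ _) ?_).symm
    intro e he hne
    have : e.1 = e.2 := by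
      by_contra h
      exact hne (Finset.mem_filter.mpr ⟨he, h⟩)
    rw [this]; ring
  rw [hdrop]
  -- termwise bound
  have hstep1 : ∑ e ∈ Ess', αss e * (x e.1 - x e.2) ^ 2
      ≤ ∑ e ∈ Ess', |αss e| * (2 * (x e.1) ^ 2 + 2 * (x e.2) ^ 2) := by
    refine Finset.sum_le_sum (fun e _ => ?_)
    nlinarith [le_abs_self (αss e), abs_nonneg (αss e), sq_nonneg (x e.1 + x e.2),
      sq_nonneg (x e.1 - x e.2)]
  have hstep2 : ∑ e ∈ Esa, αsa e * (x e.1) ^ 2 ≤ ∑ e ∈ Esa, |αsa e| * (x e.1) ^ 2 := by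
    refine Finset.sum_le_sum (fun e _ => ?_)
    have := le_abs_self (αsa e)
    nlinarith [sq_nonneg (x e.1)]
  -- regroup by vertex
  have hfib1 : ∑ e ∈ Ess', |αss e| * (2 * (x e.1) ^ 2)
      = ∑ i : Fin m, ∑ e ∈ Ess'.filter (fun e => e.1 = i), |αss e| * (2 * (x i) ^ 2) := by
    rw [← Finset.sum_fiberwise_of_maps_to (fun e _ => Finset.mem_univ e.1)
      (fun e => |αss e| * (2 * (x e.1) ^ 2))]
    exact Finset.sum_congr rfl fun i _ => Finset.sum_congr rfl fun e he => by
      rw [(Finset.mem_filter.mp he).2]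
  have hfib2 : ∑ e ∈ Ess', |αss e| * (2 * (x e.2) ^ 2)
      = ∑ i : Fin m, ∑ e ∈ Ess'.filter (fun e => e.2 = i), |αss e| * (2 * (x i) ^ 2) := by
    rw [← Finset.sum_fiberwise_of_maps_to (fun e _ => Finset.mem_univ e.2)
      (fun e => |αss e| * (2 * (x e.2) ^ 2))]
    exact Finset.sum_congr rfl fun i _ => Finset.sum_congr rfl fun e he => by
      rw [(Finset.mem_filter.mp he).2]
  have hfib3 : ∑ e ∈ Esa, |αsa e| * ((x e.1) ^ 2)
      = ∑ i : Fin m, ∑ e ∈ Esa.filter (fun e => e.1 = i), |αsa e| * ((x i) ^ 2) := by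
    rw [← Finset.sum_fiberwise_of_maps_to (fun e _ => Finset.mem_univ e.1)
      (fun e => |αsa e| * ((x e.1) ^ 2))]
    exact Finset.sum_congr rfl fun i _ => Finset.sum_congr rfl fun e he => by
      rw [(Finset.mem_filter.mp he).2]
  -- per-vertex coefficient bound
  have hcoef : ∀ i : Fin m,
      2 * (∑ e ∈ Ess'.filter (fun e => e.1 = i), |αss e|)
      + 2 * (∑ e ∈ Ess'.filter (fun e => e.2 = i), |αss e|)
      + ∑ e ∈ Esa.filter (fun e => e.1 = i), |αsa e| ≤ M := by
    intro i
    -- combine the two sensor filters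
    have hdisj : Disjoint (Ess'.filter (fun e => e.1 = i)) (Ess'.filter (fun e => e.2 = i)) := by
      rw [Finset.disjoint_left]
      intro e he1 he2
      have h1 := Finset.mem_filter.mp he1
      have h2 := Finset.mem_filter.mp he2
      have h3 := (Finset.mem_filter.mp h1.1).2
      exact h3 (h1.2.trans h2.2.symm)
    have hunion : Ess'.filter (fun e => e.1 = i) ∪ Ess'.filter (fun e => e.2 = i)
        = Ess'.filter (fun e => e.1 = i ∨ e.2 = i) := (Finset.filter_or _ _ _).symm
    have hsum_eq : (∑ e ∈ Ess'.filter (fun e => e.1 = i), |αss e|)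
        + (∑ e ∈ Ess'.filter (fun e => e.2 = i), |αss e|)
        = ∑ e ∈ Ess'.filter (fun e => e.1 = i ∨ e.2 = i), |αss e| := by
      rw [← hunion, Finset.sum_union hdisj]
    set E1 := Ess'.filter (fun e => e.1 = i ∨ e.2 = i) with hE1
    set E2 := Esa.filter (fun e => e.1 = i) with hE2
    have key : 2 * (∑ e ∈ E1, |αss e|) + ∑ e ∈ E2, |αsa e| ≤ M := by
      set s1 := ∑ e ∈ E1, (αss e) ^ 2 with hs1
      set s2 := ∑ e ∈ E2, (αsa e) ^ 2 with hs2
      have hcs1 : ∑ e ∈ E1, |αss e| ≤ Real.sqrt (E1.card : ℝ) * Real.sqrt s1 :=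
        abs_sum_le_sqrt E1 αss
      have hcs2 : ∑ e ∈ E2, |αsa e| ≤ Real.sqrt (E2.card : ℝ) * Real.sqrt s2 :=
        abs_sum_le_sqrt E2 αsa
      have hcs : 2 * (Real.sqrt (E1.card : ℝ) * Real.sqrt s1)
          + Real.sqrt (E2.card : ℝ) * Real.sqrt s2
          ≤ Real.sqrt (4 * (E1.card : ℝ) + (E2.card : ℝ)) * Real.sqrt (s1 + s2) := by
        have h2 := cs2_aux (a := 2 * Real.sqrt (E1.card : ℝ)) (b := Real.sqrt (E2.card : ℝ))
          (c := Real.sqrt s1) (d := Real.sqrt s2)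
          (by positivity) (Real.sqrt_nonneg _) (Real.sqrt_nonneg _) (Real.sqrt_nonneg _)
        have ha : (2 * Real.sqrt (E1.card : ℝ)) ^ 2 + (Real.sqrt (E2.card : ℝ)) ^ 2
            = 4 * (E1.card : ℝ) + (E2.card : ℝ) := by
          rw [mul_pow, Real.sq_sqrt (by positivity), Real.sq_sqrt (by positivity)]
          ring
        have hs1n : (0:ℝ) ≤ s1 := Finset.sum_nonneg (fun e _ => sq_nonneg _)
        have hs2n : (0:ℝ) ≤ s2 := Finset.sum_nonneg (fun e _ => sq_nonneg _)
        have hc : (Real.sqrt s1) ^ 2 + (Real.sqrt s2) ^ 2 = s1 + s2 := by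
          rw [Real.sq_sqrt hs1n, Real.sq_sqrt hs2n]
        rw [ha, hc] at h2
        linarith
      -- common bounds
      have hs1n : (0:ℝ) ≤ s1 := Finset.sum_nonneg (fun e _ => sq_nonneg _)
      have hs2n : (0:ℝ) ≤ s2 := Finset.sum_nonneg (fun e _ => sq_nonneg _)
      have hsub1 : s1 ≤ ∑ e ∈ Ess, (αss e) ^ 2 := by
        refine Finset.sum_le_sum_of_subset_of_nonneg ?_ (fun e _ _ => sq_nonneg _)
        exact (Finset.filter_subset _ _).trans (Finset.filter_subset _ _)
      have hsub2 : s2 ≤ ∑ e ∈ Esa, (αsa e) ^ 2 :=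
        Finset.sum_le_sum_of_subset_of_nonneg (Finset.filter_subset _ _)
          (fun e _ _ => sq_nonneg _)
      have hsle : s1 + s2 ≤ 2 * f₀ := by linarith
      have hsqrtle : Real.sqrt (s1 + s2) ≤ Real.sqrt (2 * f₀) :=
        Real.sqrt_le_sqrt hsle
      have hcard : (E1.card : ℝ) ≤ ((Ess.filter fun e => e.1 = i ∨ e.2 = i).card : ℝ) := by
        exact_mod_cast Finset.card_le_card
          (Finset.filter_subset_filter _ (Finset.filter_subset _ _))
      have hcard2 : Real.sqrt (4 * (E1.card : ℝ) + (E2.card : ℝ))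
          ≤ Real.sqrt (4 * ((Ess.filter fun e => e.1 = i ∨ e.2 = i).card : ℝ)
            + ((Esa.filter fun e => e.1 = i).card : ℝ)) := by
        apply Real.sqrt_le_sqrt
        rw [hE2]
        linarith
      have hsup_le : Real.sqrt (4 * ((Ess.filter fun e => e.1 = i ∨ e.2 = i).card : ℝ)
            + ((Esa.filter fun e => e.1 = i).card : ℝ)) ≤ sup := by
        rw [hsup]
        exact Finset.le_sup' (fun i : Fin m => Real.sqrt
          (4 * ((Ess.filter fun e => e.1 = i ∨ e.2 = i).card : ℝ) +
            ((Esa.filter fun e => e.1 = i).card : ℝ))) (Finset.mem_univ i)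
      have hcardnn : (0:ℝ) ≤ Real.sqrt (4 * (E1.card : ℝ) + (E2.card : ℝ)) :=
        Real.sqrt_nonneg _
      calc 2 * (∑ e ∈ E1, |αss e|) + ∑ e ∈ E2, |αsa e|
          ≤ 2 * (Real.sqrt (E1.card : ℝ) * Real.sqrt s1)
            + Real.sqrt (E2.card : ℝ) * Real.sqrt s2 := by linarith
        _ ≤ Real.sqrt (4 * (E1.card : ℝ) + (E2.card : ℝ)) * Real.sqrt (s1 + s2) := hcs
        _ ≤ Real.sqrt (4 * (E1.card : ℝ) + (E2.card : ℝ)) * Real.sqrt (2 * f₀) :=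
            mul_le_mul_of_nonneg_left hsqrtle hcardnn
        _ ≤ sup * Real.sqrt (2 * f₀) := by
            apply mul_le_mul_of_nonneg_right _ hsqrt0
            exact hcard2.trans hsup_le
        _ = M := by rw [hM]; ring
    have h2eq : 2 * (∑ e ∈ Ess'.filter (fun e => e.1 = i), |αss e|)
        + 2 * (∑ e ∈ Ess'.filter (fun e => e.2 = i), |αss e|)
        = 2 * (∑ e ∈ E1, |αss e|) := by rw [← hsum_eq]; ring
    linarith [key, h2eq]
  -- assemble
  have hT : ∑ e ∈ Ess', |αss e| * (2 * (x e.1) ^ 2 + 2 * (x e.2) ^ 2)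
      + ∑ e ∈ Esa, |αsa e| * (x e.1) ^ 2 ≤ M * ∑ i, (x i) ^ 2 := by
    have hsplit : ∑ e ∈ Ess', |αss e| * (2 * (x e.1) ^ 2 + 2 * (x e.2) ^ 2)
        = ∑ e ∈ Ess', |αss e| * (2 * (x e.1) ^ 2)
          + ∑ e ∈ Ess', |αss e| * (2 * (x e.2) ^ 2) := by
      rw [← Finset.sum_add_distrib]
      exact Finset.sum_congr rfl (fun e _ => by ring)
    rw [hsplit, hfib1, hfib2, hfib3, ← Finset.sum_add_distrib, ← Finset.sum_add_distrib,
      Finset.mul_sum]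
    refine Finset.sum_le_sum (fun i _ => ?_)
    rw [← Finset.sum_mul, ← Finset.sum_mul, ← Finset.sum_mul]
    nlinarith [mul_nonneg (sub_nonneg.mpr (hcoef i)) (sq_nonneg (x i))]
  linarith [hstep1, hstep2, hT]
end
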